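/- Suppose u ∈ Ḣ¹(ℝ^N) satisfies ‖∇u‖² < ‖∇W‖² and E(u) ≤ (1−δ₀)E(W) for some δ₀ > 0. Then there exists δ̄ = δ̄(δ₀, N) > 0 such that ∫|∇u|² ≤ (1−δ̄)∫|∇W|². -/

import Mathlib

open MeasureTheory

/-- If `u ∈ Ḣ¹(ℝ^N)` satisfies the Sobolev inequality with best constant `C`,
`‖∇u‖² < ‖∇W‖² = C^{-N}` and `E(u) ≤ (1−δ₀)E(W) = (1−δ₀)(1/N)C^{-N}`, then there exists
`δ̄ = δ̄(δ₀, N) > 0` such that `∫|∇u|² ≤ (1−δ̄)∫|∇W|²`. -/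
theorem stmt5 (N : ℕ) (hN : 3 ≤ N) (C : ℝ) (hC : 0 < C) (δ₀ : ℝ) (hδ₀ : 0 < δ₀) :
    ∃ δb > (0 : ℝ), ∀ u : EuclideanSpace ℝ (Fin N) → ℝ,
      (∫ x, |u x| ^ ((2 * (N : ℝ)) / ((N : ℝ) - 2))) ^ (((N : ℝ) - 2) / (2 * (N : ℝ)))
          ≤ C * (∫ x, ‖gradient u x‖ ^ 2) ^ ((1 : ℝ) / 2) →
      (∫ x, ‖gradient u x‖ ^ 2) < C ^ (-(N : ℝ)) →
      (1 / 2) * (∫ x, ‖gradient u x‖ ^ 2)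
          - (((N : ℝ) - 2) / (2 * (N : ℝ))) * (∫ x, |u x| ^ ((2 * (N : ℝ)) / ((N : ℝ) - 2)))
        ≤ (1 - δ₀) * ((1 / (N : ℝ)) * C ^ (-(N : ℝ))) →
      (∫ x, ‖gradient u x‖ ^ 2) ≤ (1 - δb) * C ^ (-(N : ℝ)) := by
  refine ⟨δ₀, hδ₀, fun u hS hlt hE => ?_⟩
  have hN3 : (3:ℝ) ≤ (N:ℝ) := by exact_mod_cast hN
  have hNpos : (0:ℝ) < (N:ℝ) := by linarith
  have hN2 : (0:ℝ) < (N:ℝ) - 2 := by linarith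
  set y := ∫ x, ‖gradient u x‖ ^ 2 with hy
  set m := ∫ x, |u x| ^ ((2 * (N : ℝ)) / ((N : ℝ) - 2)) with hm
  have hy0 : 0 ≤ y := integral_nonneg fun x => by positivity
  have hm0 : 0 ≤ m := integral_nonneg fun x => Real.rpow_nonneg (abs_nonneg _) _
  have ha : (0:ℝ) < ((N:ℝ)-2)/(2*(N:ℝ)) := by positivity
  have hb : (0:ℝ) < (2*(N:ℝ))/((N:ℝ)-2) := by positivity
  have hab : (((N:ℝ)-2)/(2*(N:ℝ))) * ((2*(N:ℝ))/((N:ℝ)-2)) = 1 := by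
    field_simp
  -- key step: m ≤ y
  have hmy : m ≤ y := by
    rcases eq_or_lt_of_le hy0 with h0 | hypos
    · -- y = 0, then m = 0
      have hS0 : m ^ (((N:ℝ)-2)/(2*(N:ℝ))) ≤ 0 := by
        have h := hS
        rw [← h0, Real.zero_rpow (by norm_num : (1:ℝ)/2 ≠ 0), mul_zero] at h
        exact h
      have hm' : m ^ (((N:ℝ)-2)/(2*(N:ℝ))) = 0 :=
        le_antisymm hS0 (Real.rpow_nonneg hm0 _)
      have : m = 0 := by
        by_contra hne
        have hmpos : 0 < m := lt_of_le_of_ne hm0 (Ne.symm hne)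
        have := Real.rpow_pos_of_pos hmpos (((N:ℝ)-2)/(2*(N:ℝ)))
        linarith
      rw [this, ← h0]
    · -- y > 0
      have h1 : m ≤ (C * y ^ ((1:ℝ)/2)) ^ ((2*(N:ℝ))/((N:ℝ)-2)) := by
        have h2 := Real.rpow_le_rpow (Real.rpow_nonneg hm0 _) hS hb.le
        rwa [← Real.rpow_mul hm0, hab, Real.rpow_one] at h2
      have h3 : (C * y ^ ((1:ℝ)/2)) ^ ((2*(N:ℝ))/((N:ℝ)-2))
          = C ^ ((2*(N:ℝ))/((N:ℝ)-2)) * y ^ ((N:ℝ)/((N:ℝ)-2)) := by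
        have he : (1:ℝ)/2 * (2*(N:ℝ)/((N:ℝ)-2)) = (N:ℝ)/((N:ℝ)-2) := by
          field_simp
        rw [Real.mul_rpow hC.le (Real.rpow_nonneg hy0 _), ← Real.rpow_mul hy0, he]
      have h4 : y ^ ((N:ℝ)/((N:ℝ)-2)) = y * y ^ ((2:ℝ)/((N:ℝ)-2)) := by
        have he : (N:ℝ)/((N:ℝ)-2) = 1 + 2/((N:ℝ)-2) := by field_simp; ring
        rw [he, Real.rpow_add hypos, Real.rpow_one]
      have h5 : y ^ ((2:ℝ)/((N:ℝ)-2)) ≤ (C ^ (-(N:ℝ))) ^ ((2:ℝ)/((N:ℝ)-2)) :=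
        Real.rpow_le_rpow hy0 hlt.le (by positivity)
      have h6 : (C ^ (-(N:ℝ))) ^ ((2:ℝ)/((N:ℝ)-2)) = C ^ (-((2*(N:ℝ))/((N:ℝ)-2))) := by
        have he : (-(N:ℝ)) * ((2:ℝ)/((N:ℝ)-2)) = -((2*(N:ℝ))/((N:ℝ)-2)) := by
          rw [neg_mul, neg_inj]
          field_simp
        rw [← Real.rpow_mul hC.le, he]
      have h7 : C ^ ((2*(N:ℝ))/((N:ℝ)-2)) * C ^ (-((2*(N:ℝ))/((N:ℝ)-2))) = 1 := by
        rw [← Real.rpow_add hC]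
        simp
      rw [h3, h4] at h1
      have hCb : (0:ℝ) ≤ C ^ ((2*(N:ℝ))/((N:ℝ)-2)) := (Real.rpow_pos_of_pos hC _).le
      calc m ≤ C ^ ((2*(N:ℝ))/((N:ℝ)-2)) * (y * y ^ ((2:ℝ)/((N:ℝ)-2))) := h1
        _ ≤ C ^ ((2*(N:ℝ))/((N:ℝ)-2)) * (y * C ^ (-((2*(N:ℝ))/((N:ℝ)-2)))) := by
            rw [← h6]; gcongr
        _ = y * (C ^ ((2*(N:ℝ))/((N:ℝ)-2)) * C ^ (-((2*(N:ℝ))/((N:ℝ)-2)))) := by ring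
        _ = y := by rw [h7, mul_one]
  -- conclude
  have heq : y/2 - (((N:ℝ)-2)/(2*(N:ℝ))) * y = y / (N:ℝ) := by
    field_simp
    ring
  have hk : y / (N:ℝ) ≤ (1-δ₀) * ((1/(N:ℝ)) * C ^ (-(N:ℝ))) := by
    nlinarith [hE, hmy, ha]
  have h8 := mul_le_mul_of_nonneg_left hk hNpos.le
  have h9 : (N:ℝ) * (y/(N:ℝ)) = y := by field_simp
  have h10 : (N:ℝ) * ((1-δ₀) * (1/(N:ℝ) * C ^ (-(N:ℝ)))) = (1-δ₀) * C ^ (-(N:ℝ)) := by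
    field_simp
  rw [h9, h10] at h8
  exact h8
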